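/- For the squared-hinge-loss SVM dual problem, the objective admits a global error bound from the beginning: for every initial point α⁰ ∈ [0,∞)^n there exists a constant κ > 0 such that for every α ∈ [0,∞)^n with D(α) ≤ D(α⁰), the Euclidean distance from α to the set S of minimizers of D over [0,∞)^n satisfies dist(α, S) ≤ κ·‖T(α) − α‖₂, where T(α) = (T₁(α), …, Tₙ(α)) and Tₜ(α) is the coordinate-wise minimizer Tₜ(α) = argmin_{u ≥ 0} D(α + (u − αₜ)eₜ). -/

import Mathlib

open scoped RealInnerProductSpace

namespace SVMAux
variable {n d : ℕ}

noncomputable def Amap (x : Fin n → EuclideanSpace ℝ (Fin d))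
    (α : EuclideanSpace ℝ (Fin n)) : EuclideanSpace ℝ (Fin d) := ∑ i, α i • x i

noncomputable def G (x : Fin n → EuclideanSpace ℝ (Fin d)) (C : ℝ)
    (α w : EuclideanSpace ℝ (Fin n)) : ℝ :=
  ⟪Amap x α, Amap x w⟫ + (1 / (2 * C)) * ⟪α, w⟫ - ∑ i, w i

lemma inner_euclid (α w : EuclideanSpace ℝ (Fin n)) : ⟪α, w⟫ = ∑ i, α i * w i := by
  simp [PiLp.inner_apply, RCLike.inner_apply, conj_trivial]
  exact Finset.sum_congr rfl (fun i _ => mul_comm _ _)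

lemma Amap_add (x : Fin n → EuclideanSpace ℝ (Fin d)) (α β : EuclideanSpace ℝ (Fin n)) :
    Amap x (α + β) = Amap x α + Amap x β := by
  simp [Amap, PiLp.add_apply, add_smul, Finset.sum_add_distrib]

lemma Amap_smul (x : Fin n → EuclideanSpace ℝ (Fin d)) (c : ℝ) (α : EuclideanSpace ℝ (Fin n)) :
    Amap x (c • α) = c • Amap x α := by
  simp [Amap, PiLp.smul_apply, smul_smul, Finset.smul_sum]

lemma Amap_neg (x : Fin n → EuclideanSpace ℝ (Fin d)) (α : EuclideanSpace ℝ (Fin n)) :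
    Amap x (-α) = -Amap x α := by
  simp [Amap, PiLp.neg_apply, neg_smul, Finset.sum_neg_distrib]

lemma Amap_single (x : Fin n → EuclideanSpace ℝ (Fin d)) (c : ℝ) (t : Fin n) :
    Amap x ((c : ℝ) • EuclideanSpace.single t (1:ℝ)) = c • x t := by
  rw [Amap, Finset.sum_eq_single t]
  · simp [PiLp.smul_apply, EuclideanSpace.single_apply]
  · intro i _ hne
    simp [PiLp.smul_apply, EuclideanSpace.single_apply, hne]
  · simp

lemma update_eq (α : EuclideanSpace ℝ (Fin n)) (t : Fin n) (u : ℝ) :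
    (WithLp.equiv 2 (Fin n → ℝ)).symm (Function.update α t u)
      = α + (u - α t) • EuclideanSpace.single t (1:ℝ) := by
  ext i
  rcases eq_or_ne i t with h | h
  · subst h
    simp [Function.update_apply, EuclideanSpace.single_apply, PiLp.add_apply, PiLp.smul_apply]
  · simp [Function.update_apply, h, EuclideanSpace.single_apply, PiLp.add_apply, PiLp.smul_apply]

lemma D_eq (x : Fin n → EuclideanSpace ℝ (Fin d)) (C : ℝ)
    (D : EuclideanSpace ℝ (Fin n) → ℝ)
    (hD : ∀ α, D α = (1 / 2) * ‖∑ i, α i • x i‖ ^ 2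
        + ∑ i, ((α i) ^ 2 / (4 * C) - α i))
    (α : EuclideanSpace ℝ (Fin n)) :
    D α = (1/2) * ‖Amap x α‖^2 + (1/(4*C)) * ⟪α, α⟫ - ∑ i, α i := by
  rw [hD, inner_euclid, Finset.sum_sub_distrib, Finset.mul_sum]
  have : ∀ i : Fin n, (α i)^2 / (4*C) = 1/(4*C) * (α i * α i) := by
    intro i; ring
  rw [Finset.sum_congr rfl (fun i _ => this i)]
  show _ + (_ - _) = _
  rw [Amap]
  ring

lemma D_expand (x : Fin n → EuclideanSpace ℝ (Fin d)) (C : ℝ)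
    (D : EuclideanSpace ℝ (Fin n) → ℝ)
    (hD : ∀ α, D α = (1 / 2) * ‖∑ i, α i • x i‖ ^ 2
        + ∑ i, ((α i) ^ 2 / (4 * C) - α i))
    (α w : EuclideanSpace ℝ (Fin n)) :
    D (α + w) = D α + G x C α w
      + (1/2) * (‖Amap x w‖^2 + (1/(2*C)) * ‖w‖^2) := by
  rw [D_eq x C D hD, D_eq x C D hD, Amap_add, G]
  have h1 : ‖Amap x α + Amap x w‖^2
      = ‖Amap x α‖^2 + 2 * ⟪Amap x α, Amap x w⟫ + ‖Amap x w‖^2 := norm_add_sq_real _ _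
  have h2 : ⟪α + w, α + w⟫ = ⟪α, α⟫ + 2 * ⟪α, w⟫ + ⟪w, w⟫ := real_inner_add_add_self α w
  have h3 : ∑ i, (α + w) i = ∑ i, α i + ∑ i, w i := by
    rw [← Finset.sum_add_distrib]
    exact Finset.sum_congr rfl (fun i _ => rfl)
  have h4 : ⟪w, w⟫ = ‖w‖^2 := real_inner_self_eq_norm_sq w
  rw [h1, h2, h3, h4]
  ring

lemma G_eq_sum (x : Fin n → EuclideanSpace ℝ (Fin d)) (C : ℝ)
    (α w : EuclideanSpace ℝ (Fin n)) :
    G x C α w = ∑ t, (⟪Amap x α, x t⟫ + (1/(2*C)) * α t - 1) * w t := by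
  have h1 : ⟪Amap x α, Amap x w⟫ = ∑ t, w t * ⟪Amap x α, x t⟫ := by
    have hw : Amap x w = ∑ i, w i • x i := rfl
    rw [hw, inner_sum]
    exact Finset.sum_congr rfl (fun i _ => real_inner_smul_right _ _ _)
  rw [G, h1, inner_euclid, Finset.mul_sum, ← Finset.sum_add_distrib, ← Finset.sum_sub_distrib]
  exact Finset.sum_congr rfl (fun i _ => by ring)

lemma G_smul (x : Fin n → EuclideanSpace ℝ (Fin d)) (C : ℝ) (s : ℝ)
    (α w : EuclideanSpace ℝ (Fin n)) :
    G x C α (s • w) = s * G x C α w := by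
  rw [G_eq_sum, G_eq_sum, Finset.mul_sum]
  refine Finset.sum_congr rfl (fun i _ => ?_)
  have : (s • w) i = s * w i := rfl
  rw [this]; ring

lemma G_sub_left (x : Fin n → EuclideanSpace ℝ (Fin d)) (C : ℝ)
    (α β w : EuclideanSpace ℝ (Fin n)) :
    G x C α w - G x C β w = ⟪Amap x (α - β), Amap x w⟫ + (1/(2*C)) * ⟪α - β, w⟫ := by
  have hA : Amap x (α - β) = Amap x α - Amap x β := by
    simp [Amap, PiLp.sub_apply, sub_smul, Finset.sum_sub_distrib]
  rw [G, G, hA, inner_sub_left, inner_sub_left]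
  ring

lemma G_neg_right (x : Fin n → EuclideanSpace ℝ (Fin d)) (C : ℝ)
    (α w : EuclideanSpace ℝ (Fin n)) :
    G x C α (-w) = - G x C α w := by
  rw [G_eq_sum, G_eq_sum, ← Finset.sum_neg_distrib]
  refine Finset.sum_congr rfl (fun i _ => ?_)
  have : (-w) i = -(w i) := rfl
  rw [this]; ring

lemma vi_scalar {b c w : ℝ} (hc : 0 ≤ c)
    (h : ∀ s : ℝ, 0 < s → s ≤ 1 → 0 ≤ b * (s * w) + c * (s * w) ^ 2) : 0 ≤ b * w := by
  have key : ∀ s : ℝ, 0 < s → s ≤ 1 → 0 ≤ b * w + s * (c * w ^ 2) := by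
    intro s hs hs1
    have h0 := h s hs hs1
    nlinarith [h0, hs, mul_pos hs hs]
  by_contra hcon
  push_neg at hcon
  rcases eq_or_lt_of_le (by positivity : (0:ℝ) ≤ c * w ^ 2) with h0 | hpos
  · have := key 1 one_pos le_rfl
    nlinarith
  · have hbw : 0 < -(b * w) := by linarith
    set s := min 1 (-(b * w) / (2 * (c * w ^ 2))) with hs_def
    have hspos : 0 < s := lt_min one_pos (div_pos hbw (by linarith))
    have hk := key s hspos (min_le_left _ _)
    have hle : s ≤ -(b * w) / (2 * (c * w ^ 2)) := min_le_right _ _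
    have h2 : s * (2 * (c * w ^ 2)) ≤ -(b * w) :=
      (le_div_iff₀ (by linarith : (0:ℝ) < 2 * (c * w ^ 2))).mp hle
    nlinarith [hk, h2, hbw, mul_pos hspos hpos]

lemma cs_abs (a b : EuclideanSpace ℝ (Fin n)) :
    ∑ i, |a i| * |b i| ≤ ‖a‖ * ‖b‖ := by
  set a' : EuclideanSpace ℝ (Fin n) := (WithLp.equiv 2 (Fin n → ℝ)).symm (fun i => |a i|)
  set b' : EuclideanSpace ℝ (Fin n) := (WithLp.equiv 2 (Fin n → ℝ)).symm (fun i => |b i|)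
  have ha' : ∀ i, a' i = |a i| := fun i => rfl
  have hb' : ∀ i, b' i = |b i| := fun i => rfl
  have h1 : ∑ i, |a i| * |b i| = ⟪a', b'⟫ := by
    rw [inner_euclid]
    exact Finset.sum_congr rfl (fun i _ => by rw [ha', hb'])
  have hna : ‖a'‖ = ‖a‖ := by
    rw [EuclideanSpace.norm_eq, EuclideanSpace.norm_eq]
    congr 1
    exact Finset.sum_congr rfl (fun i _ => by rw [ha']; simp)
  have hnb : ‖b'‖ = ‖b‖ := by
    rw [EuclideanSpace.norm_eq, EuclideanSpace.norm_eq]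
    congr 1
    exact Finset.sum_congr rfl (fun i _ => by rw [hb']; simp)
  rw [h1, ← hna, ← hnb]
  exact real_inner_le_norm a' b'

lemma sum_abs_le (u : EuclideanSpace ℝ (Fin n)) :
    ∑ i, |u i| ≤ Real.sqrt n * ‖u‖ := by
  have h1 : ∑ i, |u i| = ∑ i, |u i| * |((WithLp.equiv 2 (Fin n → ℝ)).symm (fun _ => (1:ℝ))) i| := by
    simp
  have h2 := cs_abs u ((WithLp.equiv 2 (Fin n → ℝ)).symm (fun _ => (1:ℝ)))
  have h3 : ‖((WithLp.equiv 2 (Fin n → ℝ)).symm (fun _ => (1:ℝ)) : EuclideanSpace ℝ (Fin n))‖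
      = Real.sqrt n := by
    rw [EuclideanSpace.norm_eq]
    simp
  rw [h1]
  rw [h3] at h2
  linarith [h2]

lemma Amap_norm_le (x : Fin n → EuclideanSpace ℝ (Fin d)) (hx1 : ∀ i, ‖x i‖ ^ 2 ≤ 1)
    (u : EuclideanSpace ℝ (Fin n)) : ‖Amap x u‖ ≤ Real.sqrt n * ‖u‖ := by
  have hx1' : ∀ i, ‖x i‖ ≤ 1 := by
    intro i
    nlinarith [hx1 i, norm_nonneg (x i)]
  calc ‖Amap x u‖ ≤ ∑ i, ‖u i • x i‖ := norm_sum_le _ _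
    _ = ∑ i, |u i| * ‖x i‖ := by
        exact Finset.sum_congr rfl (fun i _ => by rw [norm_smul]; simp)
    _ ≤ ∑ i, |u i| := by
        refine Finset.sum_le_sum (fun i _ => ?_)
        nlinarith [abs_nonneg (u i), hx1' i, norm_nonneg (x i)]
    _ ≤ Real.sqrt n * ‖u‖ := sum_abs_le u

lemma D_update (x : Fin n → EuclideanSpace ℝ (Fin d)) (C : ℝ)
    (D : EuclideanSpace ℝ (Fin n) → ℝ)
    (hD : ∀ α, D α = (1 / 2) * ‖∑ i, α i • x i‖ ^ 2
        + ∑ i, ((α i) ^ 2 / (4 * C) - α i))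
    (α : EuclideanSpace ℝ (Fin n)) (t : Fin n) (u : ℝ) :
    D ((WithLp.equiv 2 (Fin n → ℝ)).symm (Function.update α t u))
      = D α + (u - α t) * (⟪Amap x α, x t⟫ + (1/(2*C)) * α t - 1)
        + ((‖x t‖^2 + 1/(2*C))/2) * (u - α t)^2 := by
  rw [update_eq, D_expand x C D hD]
  have hA : Amap x ((u - α t) • EuclideanSpace.single t (1:ℝ)) = (u - α t) • x t :=
    Amap_single x (u - α t) t
  have hG : G x C α ((u - α t) • EuclideanSpace.single t (1:ℝ))
      = (u - α t) * (⟪Amap x α, x t⟫ + (1/(2*C)) * α t - 1) := by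
    rw [G_eq_sum, Finset.sum_eq_single t]
    · have : ((u - α t) • EuclideanSpace.single t (1:ℝ)) t = (u - α t) := by
        simp [PiLp.smul_apply, EuclideanSpace.single_apply]
      rw [this]; ring
    · intro i _ hne
      have : ((u - α t) • EuclideanSpace.single t (1:ℝ)) i = 0 := by
        simp [PiLp.smul_apply, EuclideanSpace.single_apply, hne]
      rw [this, mul_zero]
    · simp
  have hN : ‖((u - α t) • EuclideanSpace.single t (1:ℝ) : EuclideanSpace ℝ (Fin n))‖^2
      = (u - α t)^2 := by
    rw [norm_smul, mul_pow, Real.norm_eq_abs, sq_abs, EuclideanSpace.norm_single]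
    simp
  rw [hA, hG, hN, norm_smul, mul_pow, Real.norm_eq_abs, sq_abs]
  ring

end SVMAux
open scoped RealInnerProductSpace

set_option maxHeartbeats 1000000 in
open SVMAux in
theorem squared_hinge_svm_global_error_bound_from_beginning
    (n d : ℕ) (hn : 1 ≤ n) (hd : 1 ≤ d)
    (x : Fin n → EuclideanSpace ℝ (Fin d))
    (hx : ∀ i, x i ≠ 0) (hx1 : ∀ i, ‖x i‖ ^ 2 ≤ 1)
    (C : ℝ) (hC : 0 < C)
    (D : EuclideanSpace ℝ (Fin n) → ℝ)
    (hD : ∀ α, D α = (1 / 2) * ‖∑ i, α i • x i‖ ^ 2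
        + ∑ i, ((α i) ^ 2 / (4 * C) - α i))
    (orthant : Set (EuclideanSpace ℝ (Fin n)))
    (horthant : orthant = {α | ∀ i, 0 ≤ α i})
    (S : Set (EuclideanSpace ℝ (Fin n)))
    (hS : S = {α | α ∈ orthant ∧ ∀ β ∈ orthant, D α ≤ D β})
    (T : EuclideanSpace ℝ (Fin n) → EuclideanSpace ℝ (Fin n))
    (hT : ∀ α ∈ orthant, ∀ t : Fin n,
      0 ≤ T α t ∧
      (∀ u : ℝ, 0 ≤ u →
        D ((WithLp.equiv 2 (Fin n → ℝ)).symm (Function.update α t (T α t)))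
          ≤ D ((WithLp.equiv 2 (Fin n → ℝ)).symm (Function.update α t u))) ∧
      (∀ u : ℝ, 0 ≤ u →
        D ((WithLp.equiv 2 (Fin n → ℝ)).symm (Function.update α t u))
          ≤ D ((WithLp.equiv 2 (Fin n → ℝ)).symm (Function.update α t (T α t)))
            → u = T α t)) :
    ∀ α0 ∈ orthant, ∃ κ > (0 : ℝ), ∀ α ∈ orthant, D α ≤ D α0 →
      Metric.infDist α S ≤ κ * ‖T α - α‖ := by
  intro α0 _hα0
  refine ⟨2*C*n + 4*C + 3, by positivity, ?_⟩
  intro α hα _hlev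
  rcases Set.eq_empty_or_nonempty S with hemp | ⟨γ, hγ⟩
  · rw [hemp, Metric.infDist_empty]
    positivity
  -- γ is a minimizer over the orthant
  have hγS : γ ∈ orthant ∧ ∀ β ∈ orthant, D γ ≤ D β := by rw [hS] at hγ; exact hγ
  obtain ⟨hγo, hγmin⟩ := hγS
  have hαi : ∀ i, 0 ≤ α i := by rw [horthant] at hα; exact hα
  have hγi : ∀ i, 0 ≤ γ i := by rw [horthant] at hγo; exact hγo
  have hγmin' : ∀ β : EuclideanSpace ℝ (Fin n), (∀ i, 0 ≤ β i) → D γ ≤ D β := by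
    intro β hβ; exact hγmin β (by rw [horthant]; exact hβ)
  have h2C : (0:ℝ) < 1/(2*C) := by positivity
  have hpi : ∀ i, 0 ≤ T α i := fun i => (hT α hα i).1
  -- coordinatewise variational inequality
  have hcoord : ∀ t : Fin n, ∀ z : ℝ, 0 ≤ z →
      0 ≤ ((⟪Amap x α, x t⟫ + (1/(2*C)) * α t - 1)
            + (‖x t‖^2 + 1/(2*C)) * (T α t - α t)) * (z - T α t) := by
    intro t z hz
    obtain ⟨hpt0, hptmin, -⟩ := hT α hα t
    apply vi_scalar (c := (‖x t‖^2 + 1/(2*C))/2) (by positivity)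
    intro s hs hs1
    have hu0 : 0 ≤ T α t + s * (z - T α t) := by nlinarith [hpt0, hz]
    have hle := hptmin (T α t + s * (z - T α t)) hu0
    rw [D_update x C D hD, D_update x C D hD] at hle
    nlinarith [hle]
  -- global variational inequality at γ, direction T α - γ
  have hB : 0 ≤ G x C γ (T α - γ) := by
    have h := vi_scalar (b := G x C γ (T α - γ)) (w := 1)
      (c := (1/2) * (‖Amap x (T α - γ)‖^2 + (1/(2*C)) * ‖T α - γ‖^2))
      (by positivity) ?_
    · linarith [h]
    · intro s hs hs1
      have hmem : ∀ i, 0 ≤ (γ + s • (T α - γ)) i := by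
        intro i
        have hc : (γ + s • (T α - γ)) i = γ i + s * (T α i - γ i) := rfl
        rw [hc]; nlinarith [hγi i, hpi i]
      have hle := hγmin' _ hmem
      rw [D_expand x C D hD] at hle
      have hGs : G x C γ (s • (T α - γ)) = s * G x C γ (T α - γ) := G_smul x C s γ _
      have hAs : ‖Amap x (s • (T α - γ))‖^2 = s^2 * ‖Amap x (T α - γ)‖^2 := by
        rw [Amap_smul, norm_smul, mul_pow, Real.norm_eq_abs, sq_abs]
      have hNs : ‖s • (T α - γ)‖^2 = s^2 * ‖T α - γ‖^2 := by
        rw [norm_smul, mul_pow, Real.norm_eq_abs, sq_abs]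
      rw [hGs, hAs, hNs] at hle
      nlinarith [hle]
  -- sum the coordinatewise VIs with z = γ t
  have hsum : 0 ≤ ∑ t, ((⟪Amap x α, x t⟫ + (1/(2*C)) * α t - 1)
      + (‖x t‖^2 + 1/(2*C)) * (T α t - α t)) * (γ t - T α t) :=
    Finset.sum_nonneg (fun t _ => hcoord t (γ t) (hγi t))
  have hsplit : ∑ t, ((⟪Amap x α, x t⟫ + (1/(2*C)) * α t - 1)
        + (‖x t‖^2 + 1/(2*C)) * (T α t - α t)) * (γ t - T α t)
      = G x C α (γ - T α)
        + ∑ t, (‖x t‖^2 + 1/(2*C)) * (T α t - α t) * (γ t - T α t) := by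
    rw [G_eq_sum, ← Finset.sum_add_distrib]
    refine Finset.sum_congr rfl (fun t _ => ?_)
    have hc : (γ - T α) t = γ t - T α t := rfl
    rw [hc]; ring
  -- difference of gradients
  have hGdiff := G_sub_left x C α γ (γ - T α)
  have hGneg : G x C γ (γ - T α) = - G x C γ (T α - γ) := by
    rw [show (γ - T α : EuclideanSpace ℝ (Fin n)) = -(T α - γ) by abel, G_neg_right]
  have hKey : 0 ≤ ⟪Amap x (α - γ), Amap x (γ - T α)⟫ + (1/(2*C)) * ⟪α - γ, γ - T α⟫
      + ∑ t, (‖x t‖^2 + 1/(2*C)) * (T α t - α t) * (γ t - T α t) := by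
    rw [hsplit] at hsum
    linarith [hsum, hB, hGdiff, hGneg.le, hGneg.ge]
  -- decompose γ - T α = -(α - γ) + (α - T α)
  have hdec : (γ - T α : EuclideanSpace ℝ (Fin n)) = -(α - γ) + (α - T α) := by abel
  have h1 : ⟪Amap x (α - γ), Amap x (γ - T α)⟫
      = -‖Amap x (α - γ)‖^2 + ⟪Amap x (α - γ), Amap x (α - T α)⟫ := by
    rw [hdec, Amap_add, Amap_neg, inner_add_right, inner_neg_right,
      real_inner_self_eq_norm_sq]
  have h2 : ⟪(α - γ : EuclideanSpace ℝ (Fin n)), γ - T α⟫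
      = -‖(α - γ : EuclideanSpace ℝ (Fin n))‖^2 + ⟪(α - γ : EuclideanSpace ℝ (Fin n)), α - T α⟫ := by
    rw [hdec, inner_add_right, inner_neg_right, real_inner_self_eq_norm_sq]
  -- norms
  set E := ‖(α - γ : EuclideanSpace ℝ (Fin n))‖ with hE_def
  set H := ‖(T α - α : EuclideanSpace ℝ (Fin n))‖ with hH_def
  have hH' : ‖(α - T α : EuclideanSpace ℝ (Fin n))‖ = H := by rw [hH_def, norm_sub_rev]
  have hE0 : 0 ≤ E := norm_nonneg _
  have hH0 : 0 ≤ H := norm_nonneg _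
  -- bound the cross terms
  have hsqrt : Real.sqrt n * Real.sqrt n = (n:ℝ) := Real.mul_self_sqrt (Nat.cast_nonneg n)
  have hie1 : ⟪Amap x (α - γ), Amap x (α - T α)⟫ ≤ (n:ℝ) * (E * H) := by
    have ha := Amap_norm_le x hx1 (α - γ)
    have hb := Amap_norm_le x hx1 (α - T α)
    have hcs := real_inner_le_norm (Amap x (α - γ)) (Amap x (α - T α))
    have hmul : ‖Amap x (α - γ)‖ * ‖Amap x (α - T α)‖
        ≤ (Real.sqrt n * E) * (Real.sqrt n * H) := by
      rw [← hH']
      exact mul_le_mul ha hb (norm_nonneg _) (by positivity)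
    have hrw : (Real.sqrt n * E) * (Real.sqrt n * H)
        = (Real.sqrt n * Real.sqrt n) * (E * H) := by ring
    rw [hsqrt] at hrw
    linarith [hcs, hmul, hrw.le, hrw.ge]
  have hie2 : ⟪(α - γ : EuclideanSpace ℝ (Fin n)), α - T α⟫ ≤ E * H := by
    have := real_inner_le_norm (α - γ : EuclideanSpace ℝ (Fin n)) (α - T α)
    rw [hH'] at this
    exact this
  -- bound the Sq term
  have hGp : ‖(γ - T α : EuclideanSpace ℝ (Fin n))‖ ≤ E + H := by
    have hd2 : (γ - T α : EuclideanSpace ℝ (Fin n)) = -((α - γ) + (T α - α)) := by abel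
    rw [hd2, norm_neg]
    exact norm_add_le _ _
  have hSq : ∑ t, (‖x t‖^2 + 1/(2*C)) * (T α t - α t) * (γ t - T α t)
      ≤ (1 + 1/(2*C)) * (H * (E + H)) := by
    have step1 : ∑ t, (‖x t‖^2 + 1/(2*C)) * (T α t - α t) * (γ t - T α t)
        ≤ ∑ t, (1 + 1/(2*C)) * (|T α t - α t| * |γ t - T α t|) := by
      refine Finset.sum_le_sum (fun t _ => ?_)
      have t1 : (T α t - α t) * (γ t - T α t) ≤ |T α t - α t| * |γ t - T α t| := by
        rw [← abs_mul]; exact le_abs_self _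
      have t2 : (0:ℝ) < ‖x t‖^2 + 1/(2*C) := by positivity
      have t3 : ‖x t‖^2 + 1/(2*C) ≤ 1 + 1/(2*C) := by linarith [hx1 t]
      nlinarith [t1, t2, t3, mul_nonneg (abs_nonneg (T α t - α t)) (abs_nonneg (γ t - T α t))]
    have step2 : ∑ t, |T α t - α t| * |γ t - T α t|
        ≤ H * ‖(γ - T α : EuclideanSpace ℝ (Fin n))‖ := by
      have := cs_abs (T α - α) (γ - T α)
      have hconv : ∑ t, |T α t - α t| * |γ t - T α t|
          = ∑ t, |(T α - α : EuclideanSpace ℝ (Fin n)) t| * |(γ - T α : EuclideanSpace ℝ (Fin n)) t| :=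
        Finset.sum_congr rfl (fun t _ => rfl)
      rw [hconv]
      exact this
    calc ∑ t, (‖x t‖^2 + 1/(2*C)) * (T α t - α t) * (γ t - T α t)
        ≤ (1 + 1/(2*C)) * ∑ t, |T α t - α t| * |γ t - T α t| := by
          rw [← Finset.mul_sum] at step1; exact step1
      _ ≤ (1 + 1/(2*C)) * (H * ‖(γ - T α : EuclideanSpace ℝ (Fin n))‖) := by
          have h := mul_le_mul_of_nonneg_left step2 (by positivity : (0:ℝ) ≤ 1 + 1/(2*C))
          exact h
      _ ≤ (1 + 1/(2*C)) * (H * (E + H)) := by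
          have h := mul_le_mul_of_nonneg_left
            (mul_le_mul_of_nonneg_left hGp hH0) (by positivity : (0:ℝ) ≤ 1 + 1/(2*C))
          exact h
  -- the master inequality
  have F : (1/(2*C)) * E^2 ≤ ((n:ℝ) + 1/(2*C)) * (E * H) + (1 + 1/(2*C)) * (H * (E + H)) := by
    have hAe : 0 ≤ ‖Amap x (α - γ)‖^2 := by positivity
    have hmul2 := mul_le_mul_of_nonneg_left hie2 h2C.le
    nlinarith [hKey, h1, h2, hie1, hmul2, hSq, hAe]
  -- conclude
  have hinf : Metric.infDist α S ≤ E := by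
    have hid : Metric.infDist α S ≤ dist α γ := Metric.infDist_le_dist_of_mem hγ
    rw [dist_eq_norm] at hid
    exact hid
  have hfinal : E ≤ (2*C*n + 4*C + 3) * H := by
    rcases le_or_gt E H with hcase | hcase
    · nlinarith [mul_nonneg (mul_nonneg hC.le (Nat.cast_nonneg n : (0:ℝ) ≤ n)) hH0,
        mul_nonneg hC.le hH0, hH0]
    · have hEpos : 0 < E := lt_of_le_of_lt hH0 hcase
      have F2 : E^2 ≤ (2*C*n+1)*(E*H) + (2*C+1)*(H*(E+H)) := by
        have h2Cpos : (0:ℝ) < 2*C := by positivity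
        have hm := mul_le_mul_of_nonneg_left F h2Cpos.le
        have e1 : 2*C*((1/(2*C)) * E^2) = E^2 := by field_simp
        have hCC : 2*C*(1/(2*C)) = 1 := by field_simp
        have e2 : 2*C*((((n:ℝ)) + 1/(2*C)) * (E*H) + (1+1/(2*C)) * (H*(E+H)))
            = (2*C*n+1)*(E*H) + (2*C+1)*(H*(E+H)) := by
          have hexp : 2*C*((((n:ℝ)) + 1/(2*C)) * (E*H) + (1+1/(2*C)) * (H*(E+H)))
              = (2*C*(n:ℝ) + 2*C*(1/(2*C)))*(E*H)
                + (2*C + 2*C*(1/(2*C)))*(H*(E+H)) := by ring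
          rw [hexp, hCC]
        rw [e1, e2] at hm
        exact hm
      nlinarith [F2, mul_le_mul_of_nonneg_right hcase.le hH0, hEpos, hH0,
        mul_nonneg (mul_nonneg hC.le (Nat.cast_nonneg n : (0:ℝ) ≤ n)) hH0,
        mul_pos hEpos hEpos, hC.le]
  calc Metric.infDist α S ≤ E := hinf
    _ ≤ (2*C*n + 4*C + 3) * H := hfinal
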